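/- Let [α_1|β_1], [α_2|β_2] ∈ S-Block(n) and set ℓ = max{len(α_1) − len(β_2), len(α_2) − len(β_1)}. Then ℓ ≥ 0, and: (i) if ℓ ≥ 2, then no element of S-Block(n) is a lower bound of both [α_1|β_1] and [α_2|β_2]; (ii) if ℓ ∈ {0, 1} and σ ∈ Dis(n) is a greatest lower bound of α_1 and α_2 in Dis(n) while ρ ∈ Dis(n) is a least upper bound of β_1 and β_2 in Dis(n), then [σ|ρ] is an S-block and is the greatest lower bound of [α_1|β_1] and [α_2|β_2] in S-Block(n); (iii) if σ' ∈ Dis(n) is a least upper bound of α_1 and α_2 in Dis(n) and ρ' ∈ Dis(n) is a greatest lower bound of β_1 and β_2 in Dis(n), then: if ρ' ⪰ σ', the pair [σ'|ρ'] is an S-block and is the least upper bound of [α_1|β_1] and [α_2|β_2] in S-Block(n), while if ρ' does not majorize σ', then no element of S-Block(n) is an upper bound of both. -/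

import Mathlib

/-- A partition: a non-increasing list of positive integers. -/
def IsPartition (π : List ℕ) : Prop :=
  π.Pairwise (· ≥ ·) ∧ ∀ x ∈ π, 0 < x

/-- A partition of `n` into distinct positive parts, listed in (strictly) decreasing order. -/
def DisPart (n : ℕ) (γ : List ℕ) : Prop :=
  γ.Pairwise (· > ·) ∧ (∀ x ∈ γ, 0 < x) ∧ γ.sum = n

/-- A partition of `n` into exactly `k` distinct positive parts. -/
def DisPartK (n k : ℕ) (γ : List ℕ) : Prop :=
  DisPart n γ ∧ γ.length = k

/-- `β` majorizes `α`. -/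
def Majorizes (β α : List ℕ) : Prop :=
  β.sum = α.sum ∧ ∀ k ≤ min α.length β.length, (α.take k).sum ≤ (β.take k).sum

/-- α(π): the parts `d_i − i + 1` for 1-based indices `i` with `d_i ≥ i`. -/
def alphaOf (π : List ℕ) : List ℕ :=
  (List.range π.length).filterMap
    (fun i => if i + 1 ≤ π.getD i 0 then some (π.getD i 0 - i) else none)

/-- Number of boxes of the Ferrers diagram strictly below the diagonal in (1-based) column `j`. -/
def betaColCount (π : List ℕ) (j : ℕ) : ℕ :=
  ((List.range π.length).filter (fun i => decide (j ≤ i ∧ j ≤ π.getD i 0))).length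

/-- β(π): the positive column counts below the main diagonal, in decreasing order. -/
def betaOf (π : List ℕ) : List ℕ :=
  ((List.range π.length).map (fun j => betaColCount π (j + 1))).filter (fun c => c != 0)

/-- The mark (modified Durfee number) `m(π) = max {i : d_i ≥ i − 1}` (1-based indices). -/
noncomputable def mark (π : List ℕ) : ℕ :=
  sSup {i : ℕ | 1 ≤ i ∧ i ≤ π.length ∧ i ≤ π.getD (i - 1) 0 + 1}

def IsIndepSet {V : Type*} (G : SimpleGraph V) (s : Set V) : Prop :=
  s.Pairwise (fun v w => ¬ G.Adj v w)

/-- `(K, S)` is a KS-partition of `G`. -/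
def IsKS {V : Type*} [Fintype V] (G : SimpleGraph V) (K S : Finset V) : Prop :=
  (∀ v, v ∈ K ∨ v ∈ S) ∧ Disjoint K S ∧ G.IsClique (K : Set V) ∧ IsIndepSet G (S : Set V)

def IsSplit {V : Type*} [Fintype V] (G : SimpleGraph V) : Prop :=
  ∃ K S, IsKS G K S

noncomputable def cliqueNum {V : Type*} [Fintype V] (G : SimpleGraph V) : ℕ :=
  sSup {n | ∃ s : Finset V, G.IsNClique n s}

noncomputable def indepNum {V : Type*} [Fintype V] (G : SimpleGraph V) : ℕ :=
  sSup {n | ∃ s : Finset V, IsIndepSet G (s : Set V) ∧ s.card = n}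

/-- A balanced split graph: some KS-partition is simultaneously K-max and S-max. -/
def IsBalancedSplit {V : Type*} [Fintype V] (G : SimpleGraph V) : Prop :=
  IsSplit G ∧ ∃ K S, IsKS G K S ∧ K.card = cliqueNum G ∧ S.card = indepNum G

/-- An unbalanced split graph. -/
def IsUnbalancedSplit {V : Type*} [Fintype V] (G : SimpleGraph V) : Prop :=
  IsSplit G ∧ ¬ ∃ K S, IsKS G K S ∧ K.card = cliqueNum G ∧ S.card = indepNum G

/-- `π` is the degree sequence of `G` (degrees in non-increasing order). -/
def HasDegSeq {V : Type*} [Fintype V] (G : SimpleGraph V) [DecidableRel G.Adj]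
    (π : List ℕ) : Prop :=
  π.Pairwise (· ≥ ·) ∧ (π : Multiset ℕ) = Finset.univ.val.map (fun v => G.degree v)

def NoIsolated {V : Type*} [Fintype V] (G : SimpleGraph V) [DecidableRel G.Adj] : Prop :=
  ∀ v, 0 < G.degree v

def IsThreshold {V : Type*} [Fintype V] (G : SimpleGraph V) : Prop :=
  ∃ (t : ℝ) (a : V → ℝ), 0 < t ∧ (∀ v, 0 < a v) ∧
    ∀ s : Finset V, (IsIndepSet G (s : Set V) ↔ ∑ v ∈ s, a v ≤ t)

noncomputable def chromNum {V : Type*} [Fintype V] (G : SimpleGraph V) : ℕ :=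
  sInf {n | G.Colorable n}

def IsNG {V : Type*} [Fintype V] (G : SimpleGraph V) : Prop :=
  chromNum G + chromNum Gᶜ = Fintype.card V + 1

def ngA {V : Type*} [Fintype V] (G : SimpleGraph V) [DecidableRel G.Adj] : Set V :=
  {v | G.degree v = chromNum G - 1}

def IsNG1 {V : Type*} [Fintype V] (G : SimpleGraph V) [DecidableRel G.Adj] : Prop :=
  IsNG G ∧ G.IsClique (ngA G)

def IsNG2 {V : Type*} [Fintype V] (G : SimpleGraph V) [DecidableRel G.Adj] : Prop :=
  IsNG G ∧ IsIndepSet G (ngA G)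

def IsNG3 {V : Type*} [Fintype V] (G : SimpleGraph V) [DecidableRel G.Adj] : Prop :=
  IsNG G ∧ Nonempty ((G.induce (ngA G)) ≃g SimpleGraph.cycleGraph 5)

/-- `[α|β]` is an S-block for the integer `n`. -/
def IsSBlock (n : ℕ) (α β : List ℕ) : Prop :=
  DisPart n α ∧ DisPart n β ∧ Majorizes β α ∧
    (α.length = β.length ∨ α.length = β.length + 1)

/-- `[α₁|β₁] ⪰ [α₂|β₂]` in the block order. -/
def BlockMaj (α₁ β₁ α₂ β₂ : List ℕ) : Prop :=
  Majorizes α₁ α₂ ∧ Majorizes β₂ β₁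

/-- τ'_k(n) = (n − C(k,2), k−1, k−2, …, 2, 1). -/
def tauMax (n k : ℕ) : List ℕ :=
  (n - Nat.choose k 2) :: ((List.range (k - 1)).reverse.map (· + 1))

/-- τ_k(n): parts (k−i+1)+q+1 for 1 ≤ i ≤ r and (k−i+1)+q for r < i ≤ k,
where n − C(k+1,2) = qk + r, 0 ≤ r < k. -/
def tauMin (n k : ℕ) : List ℕ :=
  (List.range k).map
    (fun i => (k - i) + (n - Nat.choose (k + 1) 2) / k +
      (if i < (n - Nat.choose (k + 1) 2) % k then 1 else 0))

/-- `β` covers `α` in `Dis(n)`. -/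
def CoversDis (n : ℕ) (β α : List ℕ) : Prop :=
  DisPart n α ∧ DisPart n β ∧ Majorizes β α ∧ β ≠ α ∧
    ¬ ∃ γ, DisPart n γ ∧ Majorizes β γ ∧ Majorizes γ α ∧ γ ≠ α ∧ γ ≠ β

/-- `[α₁|β₁]` covers `[α₂|β₂]` in `S-Block(n)`. -/
def BlockCovers (n : ℕ) (α₁ β₁ α₂ β₂ : List ℕ) : Prop :=
  IsSBlock n α₁ β₁ ∧ IsSBlock n α₂ β₂ ∧ BlockMaj α₁ β₁ α₂ β₂ ∧ ¬(α₁ = α₂ ∧ β₁ = β₂) ∧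
    ¬ ∃ α β, IsSBlock n α β ∧ BlockMaj α₁ β₁ α β ∧ BlockMaj α β α₂ β₂ ∧
      ¬(α = α₁ ∧ β = β₁) ∧ ¬(α = α₂ ∧ β = β₂)

/-- `[α|β]` is a threshold-covered block: member of TC(n). -/
def InTC (n : ℕ) (α β : List ℕ) : Prop :=
  IsSBlock n α β ∧ CoversDis n β α

def IsLubDis (n : ℕ) (a b c : List ℕ) : Prop :=
  Majorizes c a ∧ Majorizes c b ∧
    ∀ d, DisPart n d → Majorizes d a → Majorizes d b → Majorizes d c

def IsGlbDis (n : ℕ) (a b c : List ℕ) : Prop :=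
  Majorizes a c ∧ Majorizes b c ∧
    ∀ d, DisPart n d → Majorizes a d → Majorizes b d → Majorizes c d

lemma head_lb (a : ℕ) : ∀ (L : List ℕ) (x : ℕ), (x :: L).Pairwise (· > ·) →
    (∀ z ∈ x :: L, a < z) → a + L.length < x := by
  intro L
  induction L with
  | nil => intro x _ h; simpa using h x (by simp)
  | cons y L ih =>
    intro x hp hz
    have h1 : a + L.length < y := by
      refine ih y ?_ ?_
      · exact hp.tail
      · intro z hz'; exact hz z (List.mem_cons_of_mem _ hz')
    have h2 : y < x := (List.pairwise_cons.1 hp).1 y (by simp)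
    simp only [List.length_cons]
    omega

lemma sum_lb (a : ℕ) : ∀ (L : List ℕ), L.Pairwise (· > ·) → (∀ z ∈ L, a < z) →
    2 * a * L.length + L.length * (L.length + 1) ≤ 2 * L.sum := by
  intro L
  induction L with
  | nil => simp
  | cons x L ih =>
    intro hp hz
    have h1 := ih hp.tail (fun z hz' => hz z (List.mem_cons_of_mem _ hz'))
    have h2 := head_lb a L x hp hz
    simp only [List.sum_cons, List.length_cons]
    nlinarith

lemma sum_ub : ∀ (L : List ℕ) (a : ℕ), L.Pairwise (· > ·) → (∀ z ∈ L, z < a) →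
    2 * L.sum + L.length * (L.length + 1) ≤ 2 * a * L.length := by
  intro L
  induction L with
  | nil => simp
  | cons x L ih =>
    intro a hp hz
    have h1 := ih x hp.tail (fun z hz' => (List.pairwise_cons.1 hp).1 z hz')
    have h2 : x < a := hz x (by simp)
    simp only [List.sum_cons, List.length_cons]
    nlinarith

lemma maj_refl (a : List ℕ) : Majorizes a a := ⟨rfl, fun _ _ => le_rfl⟩

lemma maj_length {b a : List ℕ} (h : Majorizes b a) (hb : ∀ x ∈ b, 0 < x) :
    b.length ≤ a.length := by
  by_contra hlen
  push_neg at hlen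
  have hk := h.2 a.length (le_min le_rfl hlen.le)
  rw [List.take_of_length_le le_rfl] at hk
  have hsplit : (b.take a.length).sum + (b.drop a.length).sum = b.sum :=
    List.sum_take_add_sum_drop b a.length
  have hne : b.drop a.length ≠ [] := by
    intro he
    have := (List.length_drop : (b.drop a.length).length = b.length - a.length) -- maybe name
    rw [he] at this
    simp at this
    omega
  obtain ⟨y, t, hyt⟩ := List.exists_cons_of_ne_nil hne
  have hy : 0 < y := hb y (List.drop_subset _ _ (hyt ▸ (List.mem_cons_self : y ∈ y :: t)))
  have : 0 < (b.drop a.length).sum := by rw [hyt]; simp; omega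
  have hsum := h.1
  omega

lemma maj_trans {c b a : List ℕ} (hc : ∀ x ∈ c, 0 < x) (h1 : Majorizes c b)
    (h2 : Majorizes b a) : Majorizes c a := by
  have hlen : c.length ≤ b.length := maj_length h1 hc
  refine ⟨h1.1.trans h2.1, fun k hk => ?_⟩
  have hk1 : k ≤ min b.length c.length := by simp at hk ⊢; omega
  have hk2 : k ≤ min a.length b.length := by simp at hk ⊢; omega
  exact (h2.2 k hk2).trans (h1.2 k hk1)

lemma two_choose_two : ∀ m : ℕ, 2 * Nat.choose (m + 1) 2 = m * (m + 1) := by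
  intro m
  induction m with
  | zero => rfl
  | succ m ih =>
    rw [Nat.choose_succ_succ (m+1) 1, Nat.choose_one_right]
    nlinarith [ih]

/-- doubled take-sum formula for maps of the tauMin kernel over ranges, in ℤ -/
lemma range_f_sum (K q r : ℕ) : ∀ j : ℕ, j ≤ K →
    2 * ((((List.range j).map (fun i => (K - i) + q + (if i < r then 1 else 0))).sum : ℤ))
      + j * j = 2 * j * K + j + 2 * j * q + 2 * (min j r) := by
  intro j
  induction j with
  | zero => simp
  | succ j ih =>
    intro hj
    have hj' : j ≤ K := by omega
    have ihv := ih hj'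
    rw [List.range_succ]
    simp only [List.map_append, List.sum_append, List.map_cons, List.map_nil,
      List.sum_cons, List.sum_nil, add_zero]
    push_cast
    have hKj : ((K - j : ℕ) : ℤ) = (K : ℤ) - j := by
      have : j ≤ K := hj'
      push_cast [Nat.cast_sub this]; ring
    by_cases hr : j < r
    · simp only [if_pos hr]
      push_cast [hKj] at ihv ⊢
      have hminZ : ((j:ℤ) + 1) ⊓ (r:ℤ) = (j:ℤ) ⊓ (r:ℤ) + 1 := by omega
      rw [hminZ]
      linear_combination ihv
    · simp only [if_neg hr]
      push_cast [hKj] at ihv ⊢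
      have hminZ : ((j:ℤ) + 1) ⊓ (r:ℤ) = (j:ℤ) ⊓ (r:ℤ) := by omega
      rw [hminZ]
      linear_combination ihv

section TMin
variable (n K : ℕ)

lemma tauMin_length : (tauMin n K).length = K := by simp [tauMin]

lemma tauMin_sorted : (tauMin n K).Pairwise (· > ·) := by
  unfold tauMin
  rw [List.pairwise_iff_getElem]
  intro i j hi hj hij
  simp only [List.length_map, List.length_range] at hi hj
  simp only [List.getElem_map, List.getElem_range]
  have h1 : K - i ≥ K - j + 1 := by omega
  generalize (n - Nat.choose (K + 1) 2) / K = Q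
  generalize hR : (n - Nat.choose (K + 1) 2) % K = R
  split_ifs <;> omega

lemma tauMin_pos : ∀ x ∈ tauMin n K, 0 < x := by
  intro x hx
  simp only [tauMin, List.mem_map, List.mem_range] at hx
  obtain ⟨i, hi, rfl⟩ := hx
  have h1 : 1 ≤ K - i := by omega
  generalize (n - Nat.choose (K + 1) 2) / K = Q
  generalize hR : (n - Nat.choose (K + 1) 2) % K = R
  split_ifs <;> omega

lemma tauMin_sum2 (hK : 1 ≤ K) (hn : K * (K + 1) ≤ 2 * n) : 2 * (tauMin n K).sum = 2 * n := by
  have hc2 := two_choose_two K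
  set c := Nat.choose (K + 1) 2 with hc
  have hcn : c ≤ n := by omega
  have hdm := Nat.div_add_mod (n - c) K
  have hrK : (n - c) % K < K := Nat.mod_lt _ (by omega)
  have hf := range_f_sum K ((n - c) / K) ((n - c) % K) K le_rfl
  have hmin : min K ((n - c) % K) = (n - c) % K := by omega
  rw [hmin] at hf
  have : (tauMin n K).sum = (((List.range K).map
      (fun i => (K - i) + (n - c) / K + (if i < (n - c) % K then 1 else 0))).sum) := by
    rfl
  rw [this]
  have hZ : (2 * (((List.range K).map
      (fun i => (K - i) + (n - c) / K + (if i < (n - c) % K then 1 else 0))).sum : ℤ)) = 2 * n := by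
    have hq' : (K : ℤ) * (((n - c) / K : ℕ) : ℤ) + (((n - c) % K : ℕ) : ℤ) = (n : ℤ) - c := by
      have h : ((K * ((n - c) / K) + (n - c) % K : ℕ) : ℤ) = ((n - c : ℕ) : ℤ) := by
        exact_mod_cast congrArg (fun x : ℕ => (x : ℤ)) hdm
      rw [Nat.cast_sub hcn, Nat.cast_add, Nat.cast_mul] at h
      linarith [h]
    have hcZ : 2 * (c : ℤ) = K * (K + 1) := by exact_mod_cast hc2
    nlinarith [hf, hq', hcZ]
  exact_mod_cast hZ

lemma tauMin_sum (hK : 1 ≤ K) (hn : K * (K + 1) ≤ 2 * n) : (tauMin n K).sum = n := by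
  have := tauMin_sum2 n K hK hn; omega

lemma tauMin_dispart (hK : 1 ≤ K) (hn : K * (K + 1) ≤ 2 * n) : DisPart n (tauMin n K) :=
  ⟨tauMin_sorted n K, tauMin_pos n K, tauMin_sum n K hK hn⟩

end TMin

lemma keyA (K kk q p a S n r μ : ℤ)
    (h2n : 2 * n = K * K + K + 2 * K * q + 2 * r)
    (hμr : μ ≤ r) (hq : 0 ≤ q) (hp0 : 0 ≤ p) (hpW : p ≤ K - kk) (hkk : 0 ≤ kk)
    (hap : p ≤ a) (haW : a ≤ K - kk + q)
    (hS : 2 * S + p * (p + 1) ≤ 2 * (a + 1) * p) :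
    2 * kk * K + kk + 2 * kk * q + 2 * μ - kk * kk ≤ 2 * (n - S) := by
  nlinarith [sq_nonneg (K - kk - p), mul_nonneg (by linarith : (0:ℤ) ≤ K - kk - p) hq,
    mul_nonneg hp0 (by linarith : (0:ℤ) ≤ K - kk + q - a)]

lemma keyB (K kk q a T μ : ℤ)
    (hμ : μ ≤ kk) (hkk : 0 ≤ kk) (haW : K - kk + q + 1 ≤ a)
    (hT : 2 * a * kk + kk * (kk + 1) ≤ 2 * T) :
    2 * kk * K + kk + 2 * kk * q + 2 * μ - kk * kk ≤ 2 * T := by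
  nlinarith [mul_nonneg hkk (by linarith : (0:ℤ) ≤ a - (K - kk + q + 1))]

lemma keyC (K kk q n r μ : ℤ)
    (h2n : 2 * n = K * K + K + 2 * K * q + 2 * r)
    (hμr : μ ≤ r) (hq : 0 ≤ q) (hkK : kk ≤ K) (hkk : 0 ≤ kk) :
    2 * kk * K + kk + 2 * kk * q + 2 * μ - kk * kk ≤ 2 * n := by
  nlinarith [sq_nonneg (K - kk), mul_nonneg (by linarith : (0:ℤ) ≤ K - kk) hq]

lemma tauMin_maj (n K : ℕ) (hK : 1 ≤ K) (hn : K * (K + 1) ≤ 2 * n) (δ : List ℕ)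
    (hδ : DisPart n δ) (hlen : δ.length ≤ K) : Majorizes δ (tauMin n K) := by
  have hc2 := two_choose_two K
  set c := Nat.choose (K + 1) 2 with hc
  have hcn : c ≤ n := by omega
  set Q := (n - c) / K with hQ
  set R := (n - c) % K with hR
  have hdm : K * Q + R = n - c := Nat.div_add_mod (n - c) K
  have hRK : R < K := Nat.mod_lt _ (by omega)
  have htau : tauMin n K = (List.range K).map
      (fun i => (K - i) + Q + (if i < R then 1 else 0)) := rfl
  have h2n : 2 * (n : ℤ) = K * K + K + 2 * K * Q + 2 * R := by
    have h : ((K * Q + R : ℕ) : ℤ) = ((n - c : ℕ) : ℤ) := Nat.cast_inj.2 hdm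
    rw [Nat.cast_sub hcn, Nat.cast_add, Nat.cast_mul] at h
    have hcZ : 2 * (c : ℤ) = K * (K + 1) := by exact_mod_cast hc2
    nlinarith [h, hcZ]
  constructor
  · rw [hδ.2.2, tauMin_sum n K hK (by omega)]
  intro kk hkk
  rw [tauMin_length] at hkk
  set m := δ.length with hm
  have hkkm : kk ≤ m := le_trans hkk (min_le_right _ _)
  have hkkK : kk ≤ K := le_trans hkk (min_le_left _ _)
  -- tau side take
  have htake : (tauMin n K).take kk = (List.range kk).map
      (fun i => (K - i) + Q + (if i < R then 1 else 0)) := by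
    rw [htau, ← List.map_take, List.take_range, min_eq_left hkkK]
  have hfs := range_f_sum K Q R kk hkkK
  rw [← htake] at hfs
  -- delta side
  have hsplit : (δ.take kk).sum + (δ.drop kk).sum = n := by
    rw [List.sum_take_add_sum_drop, hδ.2.2]
  have goalZ : 2 * (((tauMin n K).take kk).sum : ℤ) ≤ 2 * ((δ.take kk).sum : ℤ) → 
      ((tauMin n K).take kk).sum ≤ (δ.take kk).sum := by
    intro h; exact_mod_cast (by linarith : (((tauMin n K).take kk).sum : ℤ) ≤ ((δ.take kk).sum : ℤ))
  apply goalZ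
  rcases eq_or_lt_of_le hkkm with heq | hlt
  · -- kk = m : take is whole list
    have : δ.take kk = δ := List.take_of_length_le (by omega)
    rw [this, hδ.2.2]
    have hkey := keyC (K : ℤ) kk Q n R (Nat.cast (min kk R)) h2n
      (by exact_mod_cast min_le_right kk R) (by positivity)
      (by exact_mod_cast hkkK) (by positivity)
    linarith [hfs, hkey]
  · -- kk < m
    have hpw : (δ.take kk ++ δ.drop kk).Pairwise (· > ·) := by
      rw [List.take_append_drop]; exact hδ.1
    obtain ⟨hp1, hp2, hcross⟩ := List.pairwise_append.1 hpw
    have hdlen : (δ.drop kk).length = m - kk := by rw [List.length_drop]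
    have hne : δ.drop kk ≠ [] := by
      intro he; rw [he] at hdlen; simp at hdlen; omega
    obtain ⟨a, t, hat⟩ := List.exists_cons_of_ne_nil hne
    have hamem : a ∈ δ.drop kk := by rw [hat]; exact List.mem_cons_self
    have htlen : (δ.take kk).length = kk := by
      rw [List.length_take]; omega
    have headB : 2 * a * kk + kk * (kk + 1) ≤ 2 * (δ.take kk).sum := by
      have := sum_lb a (δ.take kk) hp1 (fun z hz => hcross z hz a hamem)
      rwa [htlen] at this
    set p := m - kk with hp
    have tailB : 2 * (δ.drop kk).sum + p * (p + 1) ≤ 2 * (a + 1) * p := by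
      have := sum_ub (δ.drop kk) (a + 1) hp2 ?_
      · rwa [hdlen] at this
      · intro z hz
        rw [hat] at hz hp2
        rcases List.mem_cons.1 hz with rfl | hz'
        · omega
        · have := (List.pairwise_cons.1 hp2).1 z hz'; omega
    have hpa : p ≤ a := by
      have h0 := head_lb 0 t a (hat ▸ hp2) ?_
      · have : t.length = p - 1 := by rw [hat] at hdlen; simp at hdlen; omega
        omega
      · intro z hz
        exact hδ.2.1 z (List.drop_subset kk δ (hat ▸ hz))
    by_cases hcase : a ≤ (K - kk) + Q
    · have hkey := keyA (K : ℤ) kk Q p a ((δ.drop kk).sum : ℤ) n R (Nat.cast (min kk R)) h2n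
        (by exact_mod_cast Nat.cast_le.2 (min_le_right kk R)) (by positivity) (by positivity)
        (by push_cast; omega) (by positivity) (by exact_mod_cast hpa)
        (by push_cast; omega) (by exact_mod_cast tailB)
      have hTn : ((δ.take kk).sum : ℤ) = (n : ℤ) - ((δ.drop kk).sum : ℤ) := by
        have h' : (((δ.take kk).sum + (δ.drop kk).sum : ℕ) : ℤ) = (n : ℤ) := Nat.cast_inj.2 hsplit
        rw [Nat.cast_add] at h'
        linarith [h']
      rw [hTn]
      linarith [hfs, hkey]
    · have hkey := keyB (K : ℤ) kk Q a ((δ.take kk).sum : ℤ) (Nat.cast (min kk R))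
        (by exact_mod_cast Nat.cast_le.2 (min_le_left kk R)) (by positivity)
        (by push_cast; omega) (by exact_mod_cast headB)
      linarith [hfs, hkey]

lemma rev_range_map : ∀ m : ℕ, (List.range m).reverse.map (· + 1)
    = (List.range m).map (fun i => m - i) := by
  intro m
  induction m with
  | zero => rfl
  | succ m ih =>
    conv_lhs => rw [List.range_succ]
    rw [List.reverse_append]
    simp only [List.reverse_singleton, List.singleton_append, List.map_cons]
    rw [ih]
    conv_rhs => rw [List.range_succ_eq_map]
    simp [List.map_map, Function.comp_def, Nat.succ_sub_succ]

lemma range_g_sum (m : ℕ) : ∀ s : ℕ, s ≤ m →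
    2 * ((((List.range s).map (fun i => m - i)).sum : ℤ)) = 2 * s * m - s * s + s := by
  intro s
  induction s with
  | zero => simp
  | succ s ih =>
    intro hs
    have hs' : s ≤ m := by omega
    have ihv := ih hs'
    rw [List.range_succ, List.map_append, List.sum_append]
    simp only [List.map_cons, List.map_nil, List.sum_cons, List.sum_nil, add_zero]
    have hms : ((m - s : ℕ) : ℤ) = (m : ℤ) - s := by
      rw [Nat.cast_sub hs']
    push_cast [hms] at ihv ⊢
    linear_combination ihv

lemma tauMax_eq (n J : ℕ) : tauMax n J = (n - Nat.choose J 2) ::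
    ((List.range (J - 1)).map (fun i => (J - 1) - i)) := by
  rw [tauMax, rev_range_map]

lemma tauMax_length (n J : ℕ) (hJ : 1 ≤ J) : (tauMax n J).length = J := by
  rw [tauMax_eq]; simp; omega

lemma tauMax_choose (J : ℕ) (hJ : 1 ≤ J) : 2 * Nat.choose J 2 = (J - 1) * J := by
  obtain ⟨j, rfl⟩ : ∃ j, J = j + 1 := ⟨J - 1, by omega⟩
  simpa using two_choose_two j

lemma tauMax_head (n J : ℕ) (hJ : 1 ≤ J) (hn : J * (J + 1) ≤ 2 * n) :
    J ≤ n - Nat.choose J 2 := by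
  obtain ⟨j, rfl⟩ : ∃ j, J = j + 1 := ⟨J - 1, by omega⟩
  have hc := tauMax_choose (j + 1) (by omega)
  simp only [Nat.add_sub_cancel] at hc
  have h2 : j * (j + 1) + 2 * (j + 1) = (j + 1) * (j + 2) := by ring
  have h3 : (j + 1) * (j + 2) ≤ 2 * n := by nlinarith
  omega

lemma tauMax_sorted (n J : ℕ) (hJ : 1 ≤ J) (hn : J * (J + 1) ≤ 2 * n) :
    (tauMax n J).Pairwise (· > ·) := by
  rw [tauMax_eq]
  rw [List.pairwise_cons]
  constructor
  · intro z hz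
    simp only [List.mem_map, List.mem_range] at hz
    obtain ⟨i, hi, rfl⟩ := hz
    have := tauMax_head n J hJ hn
    omega
  · rw [List.pairwise_iff_getElem]
    intro i j hi hj hij
    simp only [List.length_map, List.length_range] at hi hj
    simp only [List.getElem_map, List.getElem_range]
    omega

lemma tauMax_pos (n J : ℕ) (hJ : 1 ≤ J) (hn : J * (J + 1) ≤ 2 * n) :
    ∀ x ∈ tauMax n J, 0 < x := by
  rw [tauMax_eq]
  intro x hx
  rcases List.mem_cons.1 hx with rfl | hx'
  · have := tauMax_head n J hJ hn; omega
  · simp only [List.mem_map, List.mem_range] at hx'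
    obtain ⟨i, hi, rfl⟩ := hx'
    omega

lemma tauMax_tail_sum (J : ℕ) (hJ : 1 ≤ J) :
    2 * ((List.range (J - 1)).map (fun i => (J - 1) - i)).sum = (J - 1) * J := by
  obtain ⟨j, rfl⟩ : ∃ j, J = j + 1 := ⟨J - 1, by omega⟩
  simp only [Nat.add_sub_cancel]
  have hg := range_g_sum j j le_rfl
  have : ((j * (j + 1) : ℕ) : ℤ) = 2 * j * j - j * j + j := by push_cast; ring
  have h2 : 2 * (((List.range j).map (fun i => j - i)).sum : ℤ) = ((j * (j + 1) : ℕ) : ℤ) := by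
    rw [hg, this]
  exact_mod_cast h2

lemma tauMax_sum (n J : ℕ) (hJ : 1 ≤ J) (hn : J * (J + 1) ≤ 2 * n) :
    (tauMax n J).sum = n := by
  have hc := tauMax_choose J hJ
  have hcn : 2 * Nat.choose J 2 ≤ 2 * n := by
    rw [hc]
    calc (J - 1) * J ≤ J * (J + 1) := Nat.mul_le_mul (by omega) (by omega)
    _ ≤ 2 * n := hn
  have ht := tauMax_tail_sum J hJ
  rw [tauMax_eq]
  simp only [List.sum_cons]
  omega

lemma tauMax_dispart (n J : ℕ) (hJ : 1 ≤ J) (hn : J * (J + 1) ≤ 2 * n) :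
    DisPart n (tauMax n J) :=
  ⟨tauMax_sorted n J hJ hn, tauMax_pos n J hJ hn, tauMax_sum n J hJ hn⟩

lemma tauMax_maj (n J : ℕ) (hJ : 1 ≤ J) (hn : J * (J + 1) ≤ 2 * n) (β : List ℕ)
    (hβ : DisPart n β) (hlen : J ≤ β.length) : Majorizes (tauMax n J) β := by
  have hc := tauMax_choose J hJ
  have hcn : Nat.choose J 2 ≤ n := by
    have : (J - 1) * J ≤ J * (J + 1) := Nat.mul_le_mul (by omega) (by omega)
    omega
  constructor
  · rw [tauMax_sum n J hJ hn, hβ.2.2]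
  intro j hj
  rw [tauMax_length n J hJ] at hj
  have hjJ : j ≤ J := le_trans hj (min_le_right _ _)
  have hjβ : j ≤ β.length := le_trans hj (min_le_left _ _)
  rcases Nat.eq_zero_or_pos j with rfl | hj1
  · simp
  -- τ take
  have htake : (tauMax n J).take j = (n - Nat.choose J 2) ::
      ((List.range (j - 1)).map (fun i => (J - 1) - i)) := by
    rw [tauMax_eq]
    obtain ⟨j', rfl⟩ : ∃ j', j = j' + 1 := ⟨j - 1, by omega⟩
    rw [List.take_succ_cons, ← List.map_take, List.take_range]
    simp only [Nat.add_sub_cancel]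
    have hmin : min j' (J - 1) = j' := by omega
    rw [hmin]
  -- denominator: drop side of β
  have hsplit : (β.take j).sum + (β.drop j).sum = n := by
    rw [List.sum_take_add_sum_drop, hβ.2.2]
  have hdlen : (β.drop j).length = β.length - j := List.length_drop
  have hdp : 2 * (β.drop j).sum ≥ (J - j) * (J - j + 1) := by
    have hlb := sum_lb 0 (β.drop j) (hβ.1.sublist (List.drop_sublist j β)) ?_
    · rw [hdlen] at hlb
      have h1 : (J - j) ≤ β.length - j := by omega
      calc (J - j) * (J - j + 1) ≤ (β.length - j) * (β.length - j + 1) :=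
            Nat.mul_le_mul h1 (by omega)
        _ ≤ 2 * (β.drop j).sum := by omega
    · intro z hz
      exact hβ.2.1 z (List.drop_subset j β hz)
  -- compute take sums in ℤ
  have hg := range_g_sum (J - 1) (j - 1) (by omega)
  have hJ1 : ((J - 1 : ℕ) : ℤ) = (J : ℤ) - 1 := by rw [Nat.cast_sub hJ]; simp
  have hj1' : ((j - 1 : ℕ) : ℤ) = (j : ℤ) - 1 := by rw [Nat.cast_sub hj1]; simp
  rw [hJ1, hj1'] at hg
  have hcZ : 2 * ((Nat.choose J 2 : ℕ) : ℤ) = ((J : ℤ) - 1) * J := by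
    have : (((J - 1) * J : ℕ) : ℤ) = ((J : ℤ) - 1) * J := by
      rw [Nat.cast_mul, hJ1]
    rw [← this]
    exact_mod_cast hc
  have hncZ : ((n - Nat.choose J 2 : ℕ) : ℤ) = (n : ℤ) - Nat.choose J 2 :=
    Nat.cast_sub hcn
  have hdpZ : 2 * ((β.drop j).sum : ℤ) ≥ ((J : ℤ) - j) * ((J : ℤ) - j + 1) := by
    have h2 : (((J - j) * (J - j + 1) : ℕ) : ℤ) = ((J : ℤ) - j) * ((J : ℤ) - j + 1) := by
      rw [Nat.cast_mul, Nat.cast_add, Nat.cast_sub hjJ]; push_cast; ring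
    rw [← h2]
    exact_mod_cast hdp
  have hTn : ((β.take j).sum : ℤ) = (n : ℤ) - ((β.drop j).sum : ℤ) := by
    have h' : (((β.take j).sum + (β.drop j).sum : ℕ) : ℤ) = (n : ℤ) := Nat.cast_inj.2 hsplit
    rw [Nat.cast_add] at h'
    linarith
  -- final comparison in ℤ
  have goalZ : ((β.take j).sum : ℤ) ≤ (((tauMax n J).take j).sum : ℤ) := by
    rw [htake]
    simp only [List.sum_cons]
    rw [Nat.cast_add, hncZ]
    nlinarith [hg, hdpZ, hTn, hcZ]
  exact_mod_cast goalZ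

lemma dispart_len_lb {n : ℕ} {γ : List ℕ} (h : DisPart n γ) :
    γ.length * (γ.length + 1) ≤ 2 * n := by
  have := sum_lb 0 γ h.1 (fun z hz => h.2.1 z hz)
  rw [h.2.2] at this
  omega

lemma dispart_zero {γ : List ℕ} (h : DisPart 0 γ) : γ = [] := by
  cases γ with
  | nil => rfl
  | cons x t =>
    have hx := h.2.1 x (by simp)
    have hs := h.2.2
    simp only [List.sum_cons] at hs
    omega

lemma dispart_pos_ne_nil {n : ℕ} {γ : List ℕ} (h : DisPart n γ) (hn : 0 < n) :
    1 ≤ γ.length := by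
  rcases γ with _ | ⟨x, t⟩
  · have := h.2.2; simp at this; omega
  · simp


/-- meets and joins in S-Block(n) ∪ {0̂, 1̂}. -/
theorem stmt18 (n : ℕ) (α₁ β₁ α₂ β₂ : List ℕ)
    (h₁ : IsSBlock n α₁ β₁) (h₂ : IsSBlock n α₂ β₂)
    (ℓ : ℤ) (hℓ : ℓ = max ((α₁.length : ℤ) - (β₂.length : ℤ))
      ((α₂.length : ℤ) - (β₁.length : ℤ))) :
    (0 ≤ ℓ) ∧
    (2 ≤ ℓ → ¬ ∃ σ ρ, IsSBlock n σ ρ ∧ BlockMaj α₁ β₁ σ ρ ∧ BlockMaj α₂ β₂ σ ρ) ∧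
    ((ℓ = 0 ∨ ℓ = 1) → ∀ σ ρ, DisPart n σ → IsGlbDis n α₁ α₂ σ →
        DisPart n ρ → IsLubDis n β₁ β₂ ρ →
          IsSBlock n σ ρ ∧ BlockMaj α₁ β₁ σ ρ ∧ BlockMaj α₂ β₂ σ ρ ∧
            ∀ σ' ρ', IsSBlock n σ' ρ' → BlockMaj α₁ β₁ σ' ρ' → BlockMaj α₂ β₂ σ' ρ' →
              BlockMaj σ ρ σ' ρ') ∧
    (∀ σ' ρ', DisPart n σ' → IsLubDis n α₁ α₂ σ' → DisPart n ρ' → IsGlbDis n β₁ β₂ ρ' →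
        (Majorizes ρ' σ' →
            IsSBlock n σ' ρ' ∧ BlockMaj σ' ρ' α₁ β₁ ∧ BlockMaj σ' ρ' α₂ β₂ ∧
              ∀ σ'' ρ'', IsSBlock n σ'' ρ'' → BlockMaj σ'' ρ'' α₁ β₁ →
                BlockMaj σ'' ρ'' α₂ β₂ → BlockMaj σ'' ρ'' σ' ρ') ∧
          (¬ Majorizes ρ' σ' →
            ¬ ∃ σ ρ, IsSBlock n σ ρ ∧ BlockMaj σ ρ α₁ β₁ ∧ BlockMaj σ ρ α₂ β₂)) := by
  obtain ⟨hα₁, hβ₁, hm₁, hl₁⟩ := h₁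
  obtain ⟨hα₂, hβ₂, hm₂, hl₂⟩ := h₂
  have lb₁ : β₁.length ≤ α₁.length := maj_length hm₁ hβ₁.2.1
  have lb₂ : β₂.length ≤ α₂.length := maj_length hm₂ hβ₂.2.1
  refine ⟨?_, ?_, ?_, ?_⟩
  · -- 0 ≤ ℓ
    rw [hℓ]
    rcases le_total α₁.length β₂.length with h | h
    · have : β₂.length ≤ α₂.length := lb₂
      have h2 : β₁.length ≤ α₂.length := by omega
      refine le_max_of_le_right ?_
      have : (β₁.length : ℤ) ≤ (α₂.length : ℤ) := by exact_mod_cast h2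
      omega
    · refine le_max_of_le_left ?_
      have : (β₂.length : ℤ) ≤ (α₁.length : ℤ) := by exact_mod_cast h
      omega
  · -- ℓ ≥ 2 : no common lower bound
    rintro h2 ⟨σ, ρ, hsb, hB1, hB2⟩
    have hσ1 : α₁.length ≤ σ.length := maj_length hB1.1 hα₁.2.1
    have hσ2 : α₂.length ≤ σ.length := maj_length hB2.1 hα₂.2.1
    have hρ1 : ρ.length ≤ β₁.length := maj_length hB1.2 hsb.2.1.2.1
    have hρ2 : ρ.length ≤ β₂.length := maj_length hB2.2 hsb.2.1.2.1
    have hsl := hsb.2.2.2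
    rw [hℓ] at h2
    have hma : (2:ℤ) ≤ (α₁.length : ℤ) - (β₂.length : ℤ) ∨
        (2:ℤ) ≤ (α₂.length : ℤ) - (β₁.length : ℤ) := by
      rcases le_max_iff.1 h2 with h | h
      · exact Or.inl h
      · exact Or.inr h
    rcases hma with h | h <;>
    · have h' : _ := h
      omega
  · -- ℓ ∈ {0,1} : glb construction
    intro hl01 σ ρ hσ hglb hρ hlub
    have hℓ1 : (ℓ : ℤ) ≤ 1 := by rcases hl01 with rfl | rfl <;> norm_num
    rw [hℓ] at hℓ1
    have hc1 : (α₁.length : ℤ) - (β₂.length : ℤ) ≤ 1 := le_trans (le_max_left _ _) hℓ1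
    have hc2 : (α₂.length : ℤ) - (β₁.length : ℤ) ≤ 1 := le_trans (le_max_right _ _) hℓ1
    have hc1' : α₁.length ≤ β₂.length + 1 := by omega
    have hc2' : α₂.length ≤ β₁.length + 1 := by omega
    -- ρ majorizes σ
    have hρσ : Majorizes ρ σ := by
      have t1 : Majorizes ρ α₁ := maj_trans hρ.2.1 hlub.1 hm₁
      exact maj_trans hρ.2.1 t1 hglb.1
    have hρσlen : ρ.length ≤ σ.length := maj_length hρσ hρ.2.1
    -- bound σ.length
    have hσlen : σ.length ≤ max α₁.length α₂.length := by
      set K := max α₁.length α₂.length with hK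
      rcases Nat.eq_zero_or_pos K with hK0 | hKpos
      · -- n = 0
        have hα₁nil : α₁ = [] := List.length_eq_zero_iff.1 (by omega)
        have hn0 : n = 0 := by rw [← hα₁.2.2, hα₁nil]; rfl
        have : σ = [] := dispart_zero (hn0 ▸ hσ)
        simp [this]
      · have hKn : K * (K + 1) ≤ 2 * n := by
          rcases le_total α₁.length α₂.length with h | h
          · rw [hK, max_eq_right h]; exact dispart_len_lb hα₂
          · rw [hK, max_eq_left h]; exact dispart_len_lb hα₁
        have hτ := tauMin_dispart n K hKpos hKn
        have hma1 := tauMin_maj n K hKpos hKn α₁ hα₁ (le_max_left _ _)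
        have hma2 := tauMin_maj n K hKpos hKn α₂ hα₂ (le_max_right _ _)
        have hσmin : Majorizes σ (tauMin n K) := hglb.2.2 (tauMin n K) hτ hma1 hma2
        have := maj_length hσmin hσ.2.1
        rwa [tauMin_length] at this
    -- bound ρ.length from below
    have hρlen : min β₁.length β₂.length ≤ ρ.length := by
      set J := min β₁.length β₂.length with hJ
      rcases Nat.eq_zero_or_pos J with hJ0 | hJpos
      · omega
      · have hJn : J * (J + 1) ≤ 2 * n := by
          rcases le_total β₁.length β₂.length with h | h
          · have h2 : J ≤ β₁.length := min_le_left _ _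
            calc J * (J + 1) ≤ β₁.length * (β₁.length + 1) :=
              Nat.mul_le_mul h2 (by omega)
            _ ≤ 2 * n := dispart_len_lb hβ₁
          · have h2 : J ≤ β₂.length := min_le_right _ _
            calc J * (J + 1) ≤ β₂.length * (β₂.length + 1) :=
              Nat.mul_le_mul h2 (by omega)
            _ ≤ 2 * n := dispart_len_lb hβ₂
        have hτ := tauMax_dispart n J hJpos hJn
        have hma1 := tauMax_maj n J hJpos hJn β₁ hβ₁ (min_le_left _ _)
        have hma2 := tauMax_maj n J hJpos hJn β₂ hβ₂ (min_le_right _ _)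
        have hρmax : Majorizes (tauMax n J) ρ := hlub.2.2 (tauMax n J) hτ hma1 hma2
        have := maj_length hρmax hτ.2.1
        rwa [tauMax_length n J hJpos] at this
    have hlen : σ.length = ρ.length ∨ σ.length = ρ.length + 1 := by omega
    refine ⟨⟨hσ, hρ, hρσ, hlen⟩, ⟨hglb.1, hlub.1⟩, ⟨hglb.2.1, hlub.2.1⟩, ?_⟩
    intro σ' ρ' hsb' hB1 hB2
    exact ⟨hglb.2.2 σ' hsb'.1 hB1.1 hB2.1, hlub.2.2 ρ' hsb'.2.1 hB1.2 hB2.2⟩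
  · -- lub part
    intro σ' ρ' hσ' hlub' hρ' hglb'
    constructor
    · intro hmaj
      have h1 : ρ'.length ≤ σ'.length := maj_length hmaj hρ'.2.1
      have h2 : σ'.length ≤ α₁.length := maj_length hlub'.1 hσ'.2.1
      have h3 : β₁.length ≤ ρ'.length := maj_length hglb'.1 hβ₁.2.1
      refine ⟨⟨hσ', hρ', hmaj, by omega⟩, ⟨hlub'.1, hglb'.1⟩, ⟨hlub'.2.1, hglb'.2.1⟩, ?_⟩
      intro σ'' ρ'' hsb'' hB1 hB2
      exact ⟨hlub'.2.2 σ'' hsb''.1 hB1.1 hB2.1, hglb'.2.2 ρ'' hsb''.2.1 hB1.2 hB2.2⟩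
    · rintro hnm ⟨σ, ρ, hsb, hB1, hB2⟩
      have hσσ' : Majorizes σ σ' := hlub'.2.2 σ hsb.1 hB1.1 hB2.1
      have hρ'ρ : Majorizes ρ' ρ := hglb'.2.2 ρ hsb.2.1 hB1.2 hB2.2
      have hρσ : Majorizes ρ σ := hsb.2.2.1
      exact hnm (maj_trans hρ'.2.1 (maj_trans hρ'.2.1 hρ'ρ hρσ) hσσ')
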